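/- Let N ≥ 1 and let I_1, …, I_{n+1} be a partition of {1,…,N} into disjoint nonempty sets with |I_i| = p_i. For y ∈ ℝ^N define x_k(y) := Σ_{r ∈ I_k} y_r^2 for k = 1,…,n+1, and for indices p ≠ q define the first-order differential operator D_{pq} f := y_p ∂_q f − y_q ∂_p f. Then for all i ≠ j in {1,…,n+1} and all k, l ∈ {1,…,n+1}: (a) Σ_{p ∈ I_i, q ∈ I_j} (D_{pq} x_k)(y) · (D_{pq} x_l)(y) = 4 x_i(y) x_j(y) (δ_{jk} − δ_{ik})(δ_{jl} − δ_{il}); (b) Σ_{p ∈ I_i, q ∈ I_j} D_{pq}(D_{pq} x_k)(y) = 2 (δ_{jk} − δ_{ik}) (p_j x_i(y) − p_i x_j(y)). -/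

import Mathlib

open Finset

/-- The first-order differential operator `D_{pq} f = y_p ∂_q f - y_q ∂_p f` on `ℝ^N`. -/
noncomputable def Dop3 {N : ℕ} (p q : Fin N) (f : (Fin N → ℝ) → ℝ) (y : Fin N → ℝ) : ℝ :=
  y p * fderiv ℝ f y (Pi.single q 1) - y q * fderiv ℝ f y (Pi.single p 1)

/-- The squared-norm coordinates `x_k(y) = Σ_{r ∈ I_k} y_r²`. -/
def xfun3 {N n : ℕ} (I : Fin (n + 1) → Finset (Fin N)) (k : Fin (n + 1))
    (y : Fin N → ℝ) : ℝ :=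
  ∑ r ∈ I k, y r ^ 2

lemma hasFDerivAt_xfun3 {N n : ℕ} (I : Fin (n + 1) → Finset (Fin N)) (k : Fin (n + 1))
    (y : Fin N → ℝ) :
    HasFDerivAt (xfun3 I k)
      (∑ r ∈ I k, (2 * y r) • (ContinuousLinearMap.proj r : (Fin N → ℝ) →L[ℝ] ℝ)) y := by
  have h : ∀ r ∈ I k, HasFDerivAt (fun z : Fin N → ℝ => z r ^ 2)
      ((2 * y r) • (ContinuousLinearMap.proj r : (Fin N → ℝ) →L[ℝ] ℝ)) y := by
    intro r _
    have h1 : HasFDerivAt (fun z : Fin N → ℝ => z r)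
        (ContinuousLinearMap.proj r : (Fin N → ℝ) →L[ℝ] ℝ) y :=
      (ContinuousLinearMap.proj (R := ℝ) (φ := fun _ : Fin N => ℝ) r).hasFDerivAt
    have := h1.fun_mul h1
    have e1 : (fun z : Fin N → ℝ => z r ^ 2) = fun i => i r * i r := by ext z; simp [sq]
    rw [e1, two_mul, add_smul]
    exact this
  exact HasFDerivAt.fun_sum h

lemma fderiv_xfun3_single {N n : ℕ} (I : Fin (n + 1) → Finset (Fin N)) (k : Fin (n + 1))
    (y : Fin N → ℝ) (q : Fin N) :
    fderiv ℝ (xfun3 I k) y (Pi.single q 1) = if q ∈ I k then 2 * y q else 0 := by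
  rw [(hasFDerivAt_xfun3 I k y).fderiv]
  simp only [ContinuousLinearMap.coe_sum', Finset.sum_apply, ContinuousLinearMap.coe_smul',
    Pi.smul_apply, ContinuousLinearMap.proj_apply, Pi.single_apply, smul_eq_mul]
  rw [Finset.sum_congr rfl (fun r _ => by rw [mul_ite, mul_one, mul_zero])]
  exact Finset.sum_ite_eq' (I k) q fun r => 2 * y r

example : True := trivial

lemma Dop3_xfun3 {N n : ℕ} (I : Fin (n + 1) → Finset (Fin N)) (k : Fin (n + 1))
    (y : Fin N → ℝ) (p' q' : Fin N) :
    Dop3 p' q' (xfun3 I k) y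
      = ((if q' ∈ I k then (2:ℝ) else 0) - (if p' ∈ I k then 2 else 0)) * (y p' * y q') := by
  rw [Dop3, fderiv_xfun3_single, fderiv_xfun3_single]
  split_ifs <;> ring

lemma Dop3_Dop3_xfun3 {N n : ℕ} (I : Fin (n + 1) → Finset (Fin N)) (k : Fin (n + 1))
    (y : Fin N → ℝ) (p' q' : Fin N) (hpq : p' ≠ q') :
    Dop3 p' q' (Dop3 p' q' (xfun3 I k)) y
      = ((if q' ∈ I k then (2:ℝ) else 0) - (if p' ∈ I k then 2 else 0))
          * (y p' ^ 2 - y q' ^ 2) := by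
  set c : ℝ := (if q' ∈ I k then (2:ℝ) else 0) - (if p' ∈ I k then 2 else 0) with hc
  have hg : Dop3 p' q' (xfun3 I k) = fun z : Fin N → ℝ => c * (z p' * z q') :=
    funext fun z => Dop3_xfun3 I k z p' q'
  have hP : HasFDerivAt (fun z : Fin N → ℝ => z p')
      (ContinuousLinearMap.proj (R := ℝ) (φ := fun _ : Fin N => ℝ) p') y :=
    (ContinuousLinearMap.proj (R := ℝ) (φ := fun _ : Fin N => ℝ) p').hasFDerivAt
  have hQ : HasFDerivAt (fun z : Fin N → ℝ => z q')
      (ContinuousLinearMap.proj (R := ℝ) (φ := fun _ : Fin N => ℝ) q') y :=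
    (ContinuousLinearMap.proj (R := ℝ) (φ := fun _ : Fin N => ℝ) q').hasFDerivAt
  have hfd := ((hP.fun_mul hQ).const_mul c : HasFDerivAt (fun z : Fin N → ℝ => c * (z p' * z q')) _ y)
  rw [Dop3, hg, hfd.fderiv]
  simp [Pi.single_apply, hpq, Ne.symm hpq]
  ring

/-- Carré du champ and generator computations for the vector fields
`L_{i,j} = Σ_{p∈I_i, q∈I_j} (y_p∂_q - y_q∂_p)²` acting on the coordinates `x_k`. -/
theorem stmt_3 (N n : ℕ) (hN : 1 ≤ N)
    (I : Fin (n + 1) → Finset (Fin N)) (p : Fin (n + 1) → ℕ)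
    (hdisj : ∀ i j, i ≠ j → Disjoint (I i) (I j))
    (hcover : ∀ r, ∃ i, r ∈ I i)
    (hne : ∀ i, (I i).Nonempty)
    (hcard : ∀ i, (I i).card = p i)
    (i j : Fin (n + 1)) (hij : i ≠ j) (y : Fin N → ℝ) :
    (∀ k l, ∑ p' ∈ I i, ∑ q' ∈ I j, Dop3 p' q' (xfun3 I k) y * Dop3 p' q' (xfun3 I l) y
        = 4 * xfun3 I i y * xfun3 I j y
            * ((if j = k then (1 : ℝ) else 0) - (if i = k then 1 else 0))
            * ((if j = l then (1 : ℝ) else 0) - (if i = l then 1 else 0)))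
    ∧ (∀ k, ∑ p' ∈ I i, ∑ q' ∈ I j, Dop3 p' q' (Dop3 p' q' (xfun3 I k)) y
        = 2 * ((if j = k then (1 : ℝ) else 0) - (if i = k then 1 else 0))
            * ((p j : ℝ) * xfun3 I i y - (p i : ℝ) * xfun3 I j y)) := by
  -- membership characterizations
  have hmem : ∀ (k : Fin (n+1)), ∀ p' ∈ I i, ∀ q' ∈ I j,
      ((if q' ∈ I k then (2:ℝ) else 0) - (if p' ∈ I k then 2 else 0))
        = 2 * ((if j = k then (1:ℝ) else 0) - (if i = k then 1 else 0)) := by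
    intro k p' hp' q' hq'
    have h1 : (q' ∈ I k) ↔ (j = k) := by
      constructor
      · intro h; by_contra hjk
        exact (Finset.disjoint_left.mp (hdisj j k hjk) hq') h
      · rintro rfl; exact hq'
    have h2 : (p' ∈ I k) ↔ (i = k) := by
      constructor
      · intro h; by_contra hik
        exact (Finset.disjoint_left.mp (hdisj i k hik) hp') h
      · rintro rfl; exact hp'
    simp only [h1, h2]
    split_ifs <;> ring
  have hpq : ∀ p' ∈ I i, ∀ q' ∈ I j, p' ≠ q' := by
    intro p' hp' q' hq' h
    exact Finset.disjoint_left.mp (hdisj i j hij) hp' (h ▸ hq')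
  constructor
  · intro k l
    set ck : ℝ := (if j = k then (1:ℝ) else 0) - (if i = k then 1 else 0)
    set cl : ℝ := (if j = l then (1:ℝ) else 0) - (if i = l then 1 else 0)
    calc ∑ p' ∈ I i, ∑ q' ∈ I j, Dop3 p' q' (xfun3 I k) y * Dop3 p' q' (xfun3 I l) y
        = ∑ p' ∈ I i, ∑ q' ∈ I j, (4 * ck * cl) * (y p' ^ 2 * y q' ^ 2) := by
          refine Finset.sum_congr rfl fun p' hp' => Finset.sum_congr rfl fun q' hq' => ?_
          rw [Dop3_xfun3, Dop3_xfun3, hmem k p' hp' q' hq', hmem l p' hp' q' hq']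
          ring
      _ = (4 * ck * cl) * ((∑ p' ∈ I i, y p' ^ 2) * (∑ q' ∈ I j, y q' ^ 2)) := by
          rw [Finset.sum_mul_sum, Finset.mul_sum]
          exact Finset.sum_congr rfl fun _ _ => by rw [Finset.mul_sum]
      _ = 4 * xfun3 I i y * xfun3 I j y * ck * cl := by rw [xfun3, xfun3]; ring
  · intro k
    set ck : ℝ := (if j = k then (1:ℝ) else 0) - (if i = k then 1 else 0)
    calc ∑ p' ∈ I i, ∑ q' ∈ I j, Dop3 p' q' (Dop3 p' q' (xfun3 I k)) y
        = ∑ p' ∈ I i, ∑ q' ∈ I j, (2 * ck) * (y p' ^ 2 - y q' ^ 2) := by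
          refine Finset.sum_congr rfl fun p' hp' => Finset.sum_congr rfl fun q' hq' => ?_
          rw [Dop3_Dop3_xfun3 I k y p' q' (hpq p' hp' q' hq'), hmem k p' hp' q' hq']
      _ = (2 * ck) * ∑ p' ∈ I i, ∑ q' ∈ I j, (y p' ^ 2 - y q' ^ 2) := by
          rw [Finset.mul_sum]
          exact Finset.sum_congr rfl fun _ _ => by rw [Finset.mul_sum]
      _ = 2 * ck * ((p j : ℝ) * xfun3 I i y - (p i : ℝ) * xfun3 I j y) := by
          have : ∑ p' ∈ I i, ∑ q' ∈ I j, (y p' ^ 2 - y q' ^ 2)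
              = (p j : ℝ) * xfun3 I i y - (p i : ℝ) * xfun3 I j y := by
            rw [Finset.sum_congr rfl (fun p' _ => Finset.sum_sub_distrib _ _),
              Finset.sum_sub_distrib]
            simp only [Finset.sum_const, nsmul_eq_mul, hcard, xfun3]
            rw [← Finset.mul_sum]
          rw [this]
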